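/- The action of Sp(1)² on Sp(3) given by (p,q) • g = diag(p,p,p) · g · diag(1,1,q)⁻¹ is free: if diag(p,p,p) g = g diag(1,1,q) for some g ∈ Sp(3), then p = q = 1. -/

import Mathlib

open Quaternion Matrix

lemma aux_comm {A : Type*} [Ring A] [Algebra ℝ A] [FiniteDimensional ℝ A]
    {a b : A} (h : a * b = 1) : b * a = 1 := by
  have h1 : (LinearMap.mulLeft ℝ a) * (LinearMap.mulLeft ℝ b) = 1 := by
    ext x; simp [Module.End.mul_apply, ← mul_assoc, h]
  have h2 := mul_eq_one_comm.mp h1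
  have := congrArg (fun f : A →ₗ[ℝ] A => f 1) h2
  simpa using this

/-- The biquotient action of `Sp(1)²` on `Sp(3)` via `(p,q) • g = diag(p,p,p) g diag(1,1,q)⁻¹`
is free: if `diag(p,p,p) g = g diag(1,1,q)` for some `g ∈ Sp(3)`, then `p = q = 1`. -/
theorem N2_action_free (p q : ℍ[ℝ]) (hp : ‖p‖ = 1) (hq : ‖q‖ = 1)
    (g : Matrix (Fin 3) (Fin 3) ℍ[ℝ]) (hg : g * gᴴ = 1)
    (h : Matrix.diagonal ![p, p, p] * g = g * Matrix.diagonal ![1, 1, q]) :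
    p = 1 ∧ q = 1 := by
  have he : ∀ i j, (![p, p, p] : Fin 3 → ℍ[ℝ]) i * g i j
      = g i j * (![1, 1, q] : Fin 3 → ℍ[ℝ]) j := by
    intro i j
    have := congrFun (congrFun h i) j
    simpa [Matrix.diagonal_mul, Matrix.mul_diagonal] using this
  have hg' : gᴴ * g = 1 := aux_comm hg
  have hgij : ∀ i i', ∑ j, g i j * star (g i' j) = (1 : Matrix (Fin 3) (Fin 3) ℍ[ℝ]) i i' := by
    intro i i'
    have := congrFun (congrFun hg i) i'
    simpa [Matrix.mul_apply, Matrix.conjTranspose_apply] using this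
  have hp1 : p = 1 := by
    by_contra hp1
    have hz : ∀ i : Fin 3, g i 0 = 0 ∧ g i 1 = 0 := by
      intro i
      have h0 := he i 0
      have h1 := he i 1
      have hpi : (![p, p, p] : Fin 3 → ℍ[ℝ]) i = p := by fin_cases i <;> rfl
      rw [hpi] at h0 h1
      simp only [Matrix.cons_val_zero, Matrix.cons_val_one, Matrix.head_cons, mul_one] at h0 h1
      constructor
      · have : (p - 1) * g i 0 = 0 := by rw [sub_mul, one_mul, h0, sub_self]
        rcases mul_eq_zero.mp this with h' | h'
        · exact absurd (sub_eq_zero.mp h') hp1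
        · exact h'
      · have : (p - 1) * g i 1 = 0 := by rw [sub_mul, one_mul, h1, sub_self]
        rcases mul_eq_zero.mp this with h' | h'
        · exact absurd (sub_eq_zero.mp h') hp1
        · exact h'
    have h01 := hgij 0 1
    rw [Fin.sum_univ_three, (hz 0).1, (hz 0).2, (hz 1).1, (hz 1).2] at h01
    simp only [zero_mul, star_zero, mul_zero, zero_add, Matrix.one_apply] at h01
    norm_num at h01
    rcases h01 with h' | h'
    · have h00 := hgij 0 0
      rw [Fin.sum_univ_three, (hz 0).1, (hz 0).2, h'] at h00
      simp [Matrix.one_apply] at h00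
    · have h11 := hgij 1 1
      rw [Fin.sum_univ_three, (hz 1).1, (hz 1).2, h'] at h11
      simp [Matrix.one_apply] at h11
  refine ⟨hp1, ?_⟩
  by_contra hq1
  have hz2 : ∀ i : Fin 3, g i 2 = 0 := by
    intro i
    have h2 := he i 2
    have hpi : (![p, p, p] : Fin 3 → ℍ[ℝ]) i = p := by fin_cases i <;> rfl
    rw [hpi, hp1] at h2
    simp only [Matrix.cons_val_two, Matrix.tail_cons, Matrix.head_cons, one_mul] at h2
    have : g i 2 * (1 - q) = 0 := by rw [mul_sub, mul_one, ← h2, sub_self]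
    rcases mul_eq_zero.mp this with h' | h'
    · exact h'
    · exact absurd (sub_eq_zero.mp h').symm hq1
  have h22 := congrFun (congrFun hg' 2) 2
  rw [Matrix.mul_apply] at h22
  simp only [Matrix.conjTranspose_apply] at h22
  rw [Fin.sum_univ_three, hz2 0, hz2 1, hz2 2] at h22
  simp [Matrix.one_apply] at h22
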